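/- Let φ be a Leibniz 2-cocycle on the twisted Schrödinger-Virasoro algebra with φ(L_0, Y_n) = φ(Y_n, L_0) = 0 for all n, and φ(L_{-1}, Y_1) = φ(L_1, Y_{-1}) = 0. Then φ(L_m, Y_n) = 0 and φ(Y_n, L_m) = 0 for all m, n ∈ ℤ. -/

import Mathlib

abbrev B : Type := ℤ ⊕ ℤ ⊕ ℤ
abbrev V : Type := B →₀ ℂ

noncomputable def Lg (n : ℤ) : V := Finsupp.single (Sum.inl n) 1
noncomputable def Yg (n : ℤ) : V := Finsupp.single (Sum.inr (Sum.inl n)) 1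
noncomputable def Mg (n : ℤ) : V := Finsupp.single (Sum.inr (Sum.inr n)) 1

/-- Bracket on basis elements of the twisted Schrödinger–Virasoro algebra. -/
noncomputable def brB : B → B → V
  | Sum.inl n, Sum.inl m => ((m : ℂ) - n) • Lg (n + m)
  | Sum.inl n, Sum.inr (Sum.inl m) => ((m : ℂ) - n / 2) • Yg (n + m)
  | Sum.inl n, Sum.inr (Sum.inr p) => (p : ℂ) • Mg (n + p)
  | Sum.inr (Sum.inl m), Sum.inl n => -(((m : ℂ) - n / 2) • Yg (n + m))
  | Sum.inr (Sum.inr p), Sum.inl n => -((p : ℂ) • Mg (n + p))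
  | Sum.inr (Sum.inl m), Sum.inr (Sum.inl m') => ((m' : ℂ) - m) • Mg (m + m')
  | _, _ => 0

/-- The bilinear extension of the bracket to the whole space. -/
noncomputable def bk : V →ₗ[ℂ] V →ₗ[ℂ] V :=
  Finsupp.lsum ℂ fun a => LinearMap.toSpanSingleton ℂ (V →ₗ[ℂ] V)
    (Finsupp.lsum ℂ fun b => LinearMap.toSpanSingleton ℂ V (brB a b))

/-- `φ` is a Leibniz 2-cocycle on the twisted Schrödinger–Virasoro algebra. -/
def IsLeibnizCocycle (φ : V →ₗ[ℂ] V →ₗ[ℂ] ℂ) : Prop :=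
  ∀ x y z : V, φ x (bk y z) = φ (bk x y) z - φ (bk x z) y

lemma bk_single (a b : B) : bk (Finsupp.single a 1) (Finsupp.single b 1) = brB a b := by
  simp [bk, Finsupp.lsum_single, LinearMap.toSpanSingleton_apply]

lemma bk_LgLg (n m : ℤ) : bk (Lg n) (Lg m) = ((m : ℂ) - n) • Lg (n + m) := bk_single _ _
lemma bk_LgYg (n m : ℤ) : bk (Lg n) (Yg m) = ((m : ℂ) - n / 2) • Yg (n + m) := bk_single _ _
lemma bk_YgLg (m n : ℤ) : bk (Yg m) (Lg n) = -(((m : ℂ) - n / 2) • Yg (n + m)) := bk_single _ _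

section Aux
variable (φ : V →ₗ[ℂ] V →ₗ[ℂ] ℂ) (hco : IsLeibnizCocycle φ)
    (h1 : ∀ n : ℤ, φ (Lg 0) (Yg n) = 0) (h2 : ∀ n : ℤ, φ (Yg n) (Lg 0) = 0)

include hco in
lemma keyA (a b c : ℤ) :
    ((c : ℂ) - b / 2) * φ (Lg a) (Yg (b + c)) =
      ((b : ℂ) - a) * φ (Lg (a + b)) (Yg c) - ((c : ℂ) - a / 2) * φ (Yg (a + c)) (Lg b) := by
  have h := hco (Lg a) (Lg b) (Yg c)
  rw [bk_LgYg, bk_LgLg, bk_LgYg] at h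
  simpa [smul_eq_mul] using h

include hco in
lemma keyS (a b c : ℤ) :
    ((b : ℂ) - a) * φ (Yg c) (Lg (a + b)) =
      -(((c : ℂ) - a / 2) * φ (Yg (a + c)) (Lg b)) +
        ((c : ℂ) - b / 2) * φ (Yg (b + c)) (Lg a) := by
  have h := hco (Yg c) (Lg a) (Lg b)
  rw [bk_LgLg, bk_YgLg, bk_YgLg] at h
  simp only [map_smul, map_neg, LinearMap.smul_apply, LinearMap.neg_apply, smul_eq_mul] at h
  linear_combination h

include hco h2 in
lemma foff (a c : ℤ) (hac : a + c ≠ 0) : φ (Lg a) (Yg c) = 0 := by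
  have h := keyA φ hco a 0 c
  rw [zero_add, add_zero, h2] at h
  have hne : ((a : ℂ) + c) ≠ 0 := by
    have := Int.cast_ne_zero (α := ℂ).mpr hac
    push_cast at this; exact this
  have hz : ((a : ℂ) + c) * φ (Lg a) (Yg c) = 0 := by push_cast at h ⊢; linear_combination h
  exact (mul_eq_zero.mp hz).resolve_left hne

include hco h2 in
lemma goff (c b : ℤ) (hbc : b + c ≠ 0) : φ (Yg c) (Lg b) = 0 := by
  have h := keyS φ hco 0 b c
  simp only [zero_add] at h
  rw [h2] at h
  have hne : ((b : ℂ) + c) ≠ 0 := by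
    have := Int.cast_ne_zero (α := ℂ).mpr hbc
    push_cast at this; exact this
  have hz : ((b : ℂ) + c) * φ (Yg c) (Lg b) = 0 := by push_cast at h ⊢; linear_combination h
  exact (mul_eq_zero.mp hz).resolve_left hne

include hco h1 h2 in
lemma gdiag (b : ℤ) : φ (Yg (-b)) (Lg b) = -φ (Lg b) (Yg (-b)) := by
  by_cases hb : b = 0
  · subst hb; simp [h1, h2]
  · have h := keyA φ hco 0 b (-b)
    rw [zero_add, zero_add, h1] at h
    have hb' : (b : ℂ) ≠ 0 := Int.cast_ne_zero.mpr hb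
    have key : (b : ℂ) * (φ (Yg (-b)) (Lg b) + φ (Lg b) (Yg (-b))) = 0 := by
      push_cast at h ⊢; linear_combination -h
    have := (mul_eq_zero.mp key).resolve_left hb'
    linear_combination this

include hco h1 h2 in
lemma Rrel (a b : ℤ) :
    (-(a : ℂ) - 3 * b / 2) * φ (Lg a) (Yg (-a)) =
      ((b : ℂ) - a) * φ (Lg (a + b)) (Yg (-(a + b))) -
        (3 * (a : ℂ) / 2 + b) * φ (Lg b) (Yg (-b)) := by
  have h := keyA φ hco a b (-a - b)
  have e1 : b + (-a - b) = -a := by ring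
  have e2 : a + (-a - b) = -b := by ring
  rw [e1, e2] at h
  have e3 : -a - b = -(a + b) := by ring
  rw [e3] at h
  rw [gdiag φ hco h1 h2 b] at h
  push_cast at h ⊢
  linear_combination h
end Aux

theorem stmt14 (φ : V →ₗ[ℂ] V →ₗ[ℂ] ℂ) (hco : IsLeibnizCocycle φ)
    (h1 : ∀ n : ℤ, φ (Lg 0) (Yg n) = 0) (h2 : ∀ n : ℤ, φ (Yg n) (Lg 0) = 0)
    (h3 : φ (Lg (-1)) (Yg 1) = 0) (h4 : φ (Lg 1) (Yg (-1)) = 0) :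
    ∀ m n : ℤ, φ (Lg m) (Yg n) = 0 ∧ φ (Yg n) (Lg m) = 0 := by
  have hF2 : φ (Lg 2) (Yg (-2)) = 0 := by
    have r1 := Rrel φ hco h1 h2 2 1
    have r2 := Rrel φ hco h1 h2 3 (-1)
    norm_num at r1 r2
    rw [h4] at r1
    rw [h3] at r2
    linear_combination (-6/5 : ℂ) * r1 + (-4/5 : ℂ) * r2
  have step_up : ∀ m : ℤ, 2 ≤ m → φ (Lg m) (Yg (-m)) = 0 →
      φ (Lg (m + 1)) (Yg (-(m + 1))) = 0 := by
    intro m hm hF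
    have h := Rrel φ hco h1 h2 m 1
    rw [hF, h4] at h
    have hne : ((1 : ℂ) - m) ≠ 0 := by
      have : (m : ℂ) ≠ 1 := by exact_mod_cast (by omega : m ≠ 1)
      intro hc; apply this; linear_combination -hc
    have hz : ((1 : ℂ) - m) * φ (Lg (m + 1)) (Yg (-(m + 1))) = 0 := by
      push_cast at h ⊢; linear_combination -h
    exact (mul_eq_zero.mp hz).resolve_left hne
  have step_down : ∀ m : ℤ, m ≤ -2 → φ (Lg m) (Yg (-m)) = 0 →
      φ (Lg (m - 1)) (Yg (-(m - 1))) = 0 := by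
    intro m hm hF
    have h := Rrel φ hco h1 h2 m (-1)
    have e1 : m + -1 = m - 1 := by ring
    rw [e1] at h
    have e2 : -(-1 : ℤ) = 1 := by norm_num
    rw [e2, h3, hF] at h
    have hne : ((-1 : ℂ) - m) ≠ 0 := by
      have : (m : ℂ) ≠ -1 := by exact_mod_cast (by omega : m ≠ -1)
      intro hc; apply this; linear_combination -hc
    have hz : ((-1 : ℂ) - m) * φ (Lg (m - 1)) (Yg (-(m - 1))) = 0 := by
      push_cast at h ⊢; linear_combination -h
    exact (mul_eq_zero.mp hz).resolve_left hne
  have hFm2 : φ (Lg (-2)) (Yg 2) = 0 := by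
    have r := Rrel φ hco h1 h2 (-2) 1
    norm_num at r
    rw [h3, h4] at r
    linear_combination (2 : ℂ) * r
  have hF : ∀ m : ℤ, φ (Lg m) (Yg (-m)) = 0 := by
    intro m
    induction m using Int.induction_on with
    | zero => exact h1 _
    | succ k ih =>
      match k with
      | 0 => simpa using h4
      | 1 => norm_num; exact hF2
      | (k + 2 : ℕ) =>
        exact step_up _ (by push_cast; omega) ih
    | pred k ih =>
      match k with
      | 0 => simpa using h3
      | 1 => norm_num; exact hFm2
      | (k + 2 : ℕ) =>
        have := step_down (-(k + 2 : ℕ) : ℤ) (by push_cast; omega) ih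
        convert this using 3
  intro m n
  by_cases hmn : m + n = 0
  · have hn : n = -m := by omega
    subst hn
    refine ⟨hF m, ?_⟩
    rw [gdiag φ hco h1 h2 m, hF m, neg_zero]
  · exact ⟨foff φ hco h2 m n hmn, goff φ hco h2 n m hmn⟩
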